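/- There exists a strictly increasing function f : ℝ → ℝ and an irrational number ξ such that f is differentiable at ξ with f'(ξ) = 1, and f'(x) = 0 for almost every x ∈ ℝ. -/

import Mathlib

open MeasureTheory Filter Set Topology
open scoped ENNReal NNReal

noncomputable def phi (h : ℝ) : ℝ :=
  if 0 < h then ((⌈h⁻¹⌉₊ : ℝ))⁻¹ else -((⌈(-h)⁻¹⌉₊ : ℝ))⁻¹

lemma phi_zero : phi 0 = 0 := by simp [phi]

lemma phi_neg (h : ℝ) : phi (-h) = -phi h := by
  rcases lt_trichotomy h 0 with hl | rfl | hl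
  · simp [phi, hl, hl.not_gt, neg_pos.2 hl]
  · simp [phi]
  · simp [phi, hl, (neg_neg_iff_pos.2 hl).not_gt, neg_nonpos_of_nonneg hl.le]

lemma phi_pos {h : ℝ} (hh : 0 < h) : 0 < phi h := by
  rw [phi, if_pos hh]
  have : 0 < ⌈h⁻¹⌉₊ := Nat.ceil_pos.2 (by positivity)
  positivity

lemma phi_le {h : ℝ} (hh : 0 < h) : phi h ≤ h := by
  rw [phi, if_pos hh]
  rw [inv_le_comm₀ (by exact_mod_cast Nat.ceil_pos.2 (by positivity)) hh]
  exact Nat.le_ceil _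

lemma phi_lower {h : ℝ} (hh : 0 < h) : h - h ^ 2 ≤ phi h := by
  rcases le_or_gt (h - h ^ 2) 0 with h0 | h0
  · exact h0.trans (phi_pos hh).le
  rw [phi, if_pos hh]
  have h1 : (⌈h⁻¹⌉₊ : ℝ) < h⁻¹ + 1 := Nat.ceil_lt_add_one (by positivity)
  have h2 : (0:ℝ) < ⌈h⁻¹⌉₊ := by exact_mod_cast Nat.ceil_pos.2 (by positivity)
  have h3 : (h⁻¹ + 1)⁻¹ ≤ ((⌈h⁻¹⌉₊ : ℝ))⁻¹ := inv_anti₀ h2 h1.le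
  refine le_trans ?_ h3
  have hA : (0:ℝ) < (h⁻¹ + 1)⁻¹ := by positivity
  have e : h⁻¹ * h = 1 := inv_mul_cancel₀ hh.ne'
  have e2 : (h⁻¹ + 1)⁻¹ * (h⁻¹ + 1) = 1 := inv_mul_cancel₀ (by positivity)
  nlinarith [mul_pos hA hh]

lemma phi_nonneg {h : ℝ} (hh : 0 ≤ h) : 0 ≤ phi h := by
  rcases eq_or_lt_of_le hh with rfl | hh'
  · simp [phi_zero]
  · exact (phi_pos hh').le

lemma phi_err (h : ℝ) : |phi h - h| ≤ h ^ 2 := by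
  rcases lt_trichotomy h 0 with hl | rfl | hl
  · have h1 := phi_le (neg_pos.2 hl)
    have h2 := phi_lower (neg_pos.2 hl)
    have h3 := phi_neg (-h)
    rw [neg_neg] at h3
    rw [abs_le]; constructor <;> nlinarith
  · simp [phi_zero]
  · have h1 := phi_le hl
    have h2 := phi_lower hl
    rw [abs_le]; constructor <;> nlinarith

lemma phi_mono : Monotone phi := by
  have key : ∀ a b : ℝ, 0 ≤ a → a ≤ b → phi a ≤ phi b := by
    intro a b ha hab
    rcases eq_or_lt_of_le ha with rfl | ha'
    · rw [phi_zero]; exact phi_nonneg hab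
    rw [phi, if_pos ha', phi, if_pos (ha'.trans_le hab)]
    have hb : 0 < b := ha'.trans_le hab
    have hcb : (0:ℝ) < ⌈b⁻¹⌉₊ := by exact_mod_cast Nat.ceil_pos.2 (by positivity)
    apply inv_anti₀ hcb
    exact_mod_cast Nat.ceil_le_ceil (by gcongr)
  intro a b hab
  rcases le_or_gt a 0 with ha | ha
  · have hpa : phi a ≤ 0 := by
      have := phi_neg (-a); rw [neg_neg] at this
      have := phi_nonneg (neg_nonneg.2 ha); linarith [phi_neg a]
    rcases le_or_gt b 0 with hb | hb
    · have e1 := phi_neg a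
      have e2 := phi_neg b
      have := key (-b) (-a) (neg_nonneg.2 hb) (by linarith)
      linarith
    · exact hpa.trans (phi_pos hb).le
  · exact key a b ha.le hab

lemma phi_locConst {c : ℝ} (hc : 0 < c) (hn : ∀ n : ℕ, c⁻¹ ≠ (n:ℝ)) :
    ∀ᶠ h in 𝓝 c, phi h = phi c := by
  have hceil : ∀ᶠ h in 𝓝 c, ⌈h⁻¹⌉₊ = ⌈c⁻¹⌉₊ := by
    set n := ⌈c⁻¹⌉₊ with hndef
    have hpos : 0 < c⁻¹ := by positivity
    have h1 : c⁻¹ ≤ (n:ℝ) := Nat.le_ceil _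
    have h2 : c⁻¹ < (n:ℝ) := lt_of_le_of_ne h1 (hn n)
    have hn1 : 0 < n := Nat.ceil_pos.2 hpos
    have h3 : ((n:ℝ)) - 1 < c⁻¹ := by
      have := Nat.ceil_lt_add_one hpos.le
      rw [← hndef] at this; linarith
    have hcont : ContinuousAt (fun h : ℝ => h⁻¹) c := continuousAt_inv₀ hc.ne'
    have hI : Set.Ioo ((n:ℝ)-1) (n:ℝ) ∈ 𝓝 (c⁻¹) := Ioo_mem_nhds h3 h2
    filter_upwards [hcont.eventually_mem hI] with h hm
    rw [Nat.ceil_eq_iff hn1.ne']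
    refine ⟨?_, hm.2.le⟩
    have : ((n-1:ℕ):ℝ) = (n:ℝ) - 1 := by
      rw [Nat.cast_sub hn1]; norm_num
    rw [this]; exact hm.1
  have hpos' : ∀ᶠ h in 𝓝 c, 0 < h := eventually_gt_nhds hc
  filter_upwards [hceil, hpos'] with h h1 h2
  rw [phi, if_pos h2, phi, if_pos hc, h1]

lemma phi_eventually_const {c : ℝ} (hc : c ≠ 0) (hn : ∀ n : ℤ, c ≠ ((n:ℝ))⁻¹) :
    ∀ᶠ h in 𝓝 c, phi h = phi c := by
  have key : ∀ c : ℝ, 0 < c → (∀ n : ℤ, c ≠ ((n:ℝ))⁻¹) → ∀ᶠ h in 𝓝 c, phi h = phi c := by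
    intro c hc hn
    apply phi_locConst hc
    intro n hcn
    have hn0 : n ≠ 0 := by
      intro h; rw [h] at hcn; simp at hcn; exact hc.ne' hcn
    apply hn (n : ℤ)
    push_cast
    rw [← hcn, inv_inv]
  rcases lt_or_gt_of_ne hc with hneg | hpos
  · have hn' : ∀ n : ℤ, -c ≠ ((n:ℝ))⁻¹ := by
      intro n h
      apply hn (-n)
      push_cast
      rw [← neg_inv, ← h, neg_neg]
    have ev := key (-c) (neg_pos.2 hneg) hn'
    have htend : Tendsto (fun h : ℝ => -h) (𝓝 c) (𝓝 (-c)) :=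
      (continuous_neg.tendsto c)
    filter_upwards [htend.eventually ev] with h hh
    have e1 : phi (-h) = -phi h := phi_neg h
    have e2 : phi (-c) = -phi c := phi_neg c
    rw [e1, e2] at hh
    linarith
  · exact key c hpos hn

theorem stmt5 :
    ∃ (f : ℝ → ℝ) (ξ : ℝ), StrictMono f ∧ Irrational ξ ∧ HasDerivAt f 1 ξ ∧
      ∀ᵐ x : ℝ ∂MeasureTheory.volume, HasDerivAt f 0 x := by
  classical
  set q : ℕ → ℝ := fun n => (((Denumerable.eqv ℚ).symm n : ℚ) : ℝ) with hq
  set μ : Measure ℝ := Measure.sum (fun n => ((2:ℝ≥0∞)⁻¹)^(n+1) • Measure.dirac (q n)) with hμ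
  have hsum1 : ∑' n : ℕ, ((2:ℝ≥0∞)⁻¹)^(n+1) = 1 := by
    have h : ∀ n:ℕ, ((2:ℝ≥0∞)⁻¹)^(n+1) = ((2:ℝ≥0∞)⁻¹)^n * 2⁻¹ := fun n => pow_succ _ _
    rw [tsum_congr h, ENNReal.tsum_mul_right, ENNReal.tsum_geometric,
      ENNReal.one_sub_inv_two, inv_inv, ENNReal.mul_inv_cancel two_ne_zero ENNReal.ofNat_ne_top]
  haveI hprob : IsProbabilityMeasure μ := by
    constructor
    rw [hμ, Measure.sum_apply _ MeasurableSet.univ]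
    simp only [Measure.smul_apply, measure_univ, smul_eq_mul, mul_one]
    exact hsum1
  have hsing : μ ⟂ₘ (volume : Measure ℝ) := by
    refine ⟨(Set.range q)ᶜ, (Set.countable_range q).measurableSet.compl, ?_, ?_⟩
    · rw [hμ, Measure.sum_apply _ (Set.countable_range q).measurableSet.compl]
      have h0 : ∀ n, Measure.dirac (q n) ((Set.range q)ᶜ) = 0 := by
        intro n
        rw [Measure.dirac_apply]
        simp [Set.indicator_of_notMem, Set.mem_range_self]
      simp [h0]
    · rw [compl_compl]
      exact (Set.countable_range q).measure_zero volume
  have hIoc : ∀ x y : ℝ, x < y → μ (Set.Ioc x y) ≠ 0 := by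
    intro x y hxy
    obtain ⟨r, hr1, hr2⟩ := exists_rat_btwn hxy
    set n := Denumerable.eqv ℚ r with hn
    have hqn : q n = (r:ℝ) := congrArg Rat.cast (Equiv.symm_apply_apply _ r)
    have hle := Measure.le_iff'.1
      (Measure.le_sum (fun n => ((2:ℝ≥0∞)⁻¹)^(n+1) • Measure.dirac (q n)) n) (Set.Ioc x y)
    rw [Measure.smul_apply, hqn, Measure.dirac_apply_of_mem (Set.mem_Ioc.2 ⟨hr1, hr2.le⟩), smul_eq_mul,
      mul_one] at hle
    rw [← hμ] at hle
    intro h0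
    rw [h0] at hle
    exact (pow_ne_zero _ (by simp)) (le_zero_iff.1 hle)
  set g := ProbabilityTheory.cdf μ with hg
  have hgmono : StrictMono (g : ℝ → ℝ) := by
    intro x y hxy
    have hm := g.measure_Ioc x y
    rw [hg, ProbabilityTheory.measure_cdf] at hm
    have hne := hIoc x y hxy
    rw [hm, ne_eq, ENNReal.ofReal_eq_zero, not_le] at hne
    linarith
  have hg0 : ∀ᵐ x : ℝ ∂volume, HasDerivAt g 0 x := by
    have h1 := g.ae_hasDerivAt
    rw [hg, ProbabilityTheory.measure_cdf] at h1
    have h2 : μ.rnDeriv volume =ᵐ[volume] 0 := (Measure.rnDeriv_eq_zero μ volume).2 hsing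
    filter_upwards [h1, h2] with x hx1 hx2
    rw [Pi.zero_apply] at hx2
    simpa [hx2] using hx1
  have hirr : ∀ᵐ x : ℝ ∂volume, Irrational x := by
    have hset : {x : ℝ | ¬ Irrational x} = Set.range (Rat.cast : ℚ → ℝ) := by
      ext x; simp [Irrational]
    rw [ae_iff, hset]
    exact (Set.countable_range _).measure_zero volume
  haveI : (MeasureTheory.ae (volume : Measure ℝ)).NeBot := ae_neBot.2 (by
    intro h
    have h2 := congrArg (fun m : Measure ℝ => m (Set.Icc 0 1)) h
    simp [Real.volume_Icc] at h2)
  obtain ⟨ξ, hξd, hξirr⟩ := (hg0.and hirr).exists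
  refine ⟨fun x => g x + phi (x - ξ), ξ, ?_, hξirr, ?_, ?_⟩
  · intro x y hxy
    have h1 := hgmono hxy
    have h2 := phi_mono (sub_le_sub_right hxy.le ξ)
    dsimp only
    linarith
  · have hl : HasDerivAt (fun x => phi (x - ξ)) 1 ξ := by
      rw [hasDerivAt_iff_isLittleO]
      have sq : (fun x : ℝ => (x - ξ)^2) =o[𝓝 ξ] (fun x => x - ξ) := by
        have h2 : HasDerivAt (fun x : ℝ => (x-ξ)^2) 0 ξ := by
          have h3 := ((hasDerivAt_id ξ).sub_const ξ).pow 2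
          norm_num at h3
          exact h3
        simpa using hasDerivAt_iff_isLittleO.1 h2
      refine Asymptotics.IsBigO.trans_isLittleO ?_ sq
      refine Asymptotics.isBigO_of_le _ (fun x => ?_)
      simp only [sub_self, phi_zero, sub_zero, smul_eq_mul, mul_one,
        Real.norm_eq_abs]
      calc |phi (x - ξ) - (x - ξ)| ≤ (x - ξ)^2 := phi_err _
        _ ≤ |(x - ξ)^2| := le_abs_self _
    have hsum := hξd.add hl
    norm_num at hsum
    exact hsum
  · set B : Set ℝ := insert ξ (⋃ n : ℤ, {ξ + ((n:ℝ))⁻¹}) with hB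
    have hBc : B.Countable :=
      (Set.countable_iUnion (fun n => Set.countable_singleton _)).insert ξ
    filter_upwards [hg0, hBc.ae_notMem volume] with x hx1 hx2
    have hxne : x ≠ ξ := fun h => hx2 (by rw [h, hB]; exact Set.mem_insert _ _)
    have hc : x - ξ ≠ 0 := sub_ne_zero.2 hxne
    have hnn : ∀ n : ℤ, x - ξ ≠ ((n:ℝ))⁻¹ := by
      intro n h
      apply hx2
      rw [hB]
      refine Set.mem_insert_of_mem _ (Set.mem_iUnion.2 ⟨n, ?_⟩)
      rw [Set.mem_singleton_iff, ← h]
      ring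
    have hev := phi_eventually_const hc hnn
    have htend : Tendsto (fun y : ℝ => y - ξ) (𝓝 x) (𝓝 (x - ξ)) :=
      (continuous_id.sub continuous_const).tendsto x
    have hev2 : (fun y => phi (y - ξ)) =ᶠ[𝓝 x] fun _ => phi (x - ξ) := htend.eventually hev
    have hl0 : HasDerivAt (fun y => phi (y - ξ)) 0 x :=
      (hasDerivAt_const x (phi (x - ξ))).congr_of_eventuallyEq hev2
    have hfin := hx1.add hl0
    rw [add_zero] at hfin
    exact hfin
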